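/- For positive definite matrices V, one has I_M(A:B)_V = I_M(A:B)_{V^{-1}}: the log-determinant mutual information of a bipartite positive definite matrix equals that of its inverse. -/

import Mathlib

open Matrix

/-- The log-determinant mutual information of a bipartite positive matrix. -/
noncomputable def IM {α β : Type*} [Fintype α] [Fintype β] [DecidableEq α] [DecidableEq β]
    (W : Matrix (α ⊕ β) (α ⊕ β) ℝ) : ℝ :=
  (1/2) * Real.logb 2 ((W.toBlocks₁₁.det * W.toBlocks₂₂.det) / W.det)

lemma posDef_toBlocks₁₁ {α β : Type*} [Fintype α] [Fintype β]
    (W : Matrix (α ⊕ β) (α ⊕ β) ℝ) (hW : W.PosDef) : W.toBlocks₁₁.PosDef := by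
  refine Matrix.PosDef.of_dotProduct_mulVec_pos ?_ ?_
  · ext i j
    simpa [toBlocks₁₁] using congrFun (congrFun hW.1 (Sum.inl i)) (Sum.inl j)
  · intro x hx
    have hy : (Sum.elim x 0 : α ⊕ β → ℝ) ≠ 0 := by
      intro h
      apply hx
      ext i
      exact congrFun h (Sum.inl i)
    have := hW.dotProduct_mulVec_pos hy
    simpa [dotProduct, mulVec, Fintype.sum_sum_type, toBlocks₁₁] using this

lemma posDef_toBlocks₂₂ {α β : Type*} [Fintype α] [Fintype β]
    (W : Matrix (α ⊕ β) (α ⊕ β) ℝ) (hW : W.PosDef) : W.toBlocks₂₂.PosDef := by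
  refine Matrix.PosDef.of_dotProduct_mulVec_pos ?_ ?_
  · ext i j
    simpa [toBlocks₂₂] using congrFun (congrFun hW.1 (Sum.inr i)) (Sum.inr j)
  · intro x hx
    have hy : (Sum.elim 0 x : α ⊕ β → ℝ) ≠ 0 := by
      intro h
      apply hx
      ext i
      exact congrFun h (Sum.inr i)
    have := hW.dotProduct_mulVec_pos hy
    simpa [dotProduct, mulVec, Fintype.sum_sum_type, toBlocks₂₂] using this

/-- The log-determinant mutual information of a bipartite positive definite matrix equals
that of its inverse: `I_M(A:B)_V = I_M(A:B)_{V⁻¹}`. -/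
theorem IM_inv {α β : Type*} [Fintype α] [Fintype β] [DecidableEq α] [DecidableEq β]
    (V : Matrix (α ⊕ β) (α ⊕ β) ℝ) (hV : V.PosDef) :
    IM V = IM V⁻¹ := by
  set A := V.toBlocks₁₁ with hA
  set B := V.toBlocks₁₂ with hB
  set C := V.toBlocks₂₁ with hC
  set D := V.toBlocks₂₂ with hD
  have hVfb : V = fromBlocks A B C D := (fromBlocks_toBlocks V).symm
  have hApd : A.PosDef := posDef_toBlocks₁₁ V hV
  have hDpd : D.PosDef := posDef_toBlocks₂₂ V hV
  letI : Invertible A := invertibleOfIsUnitDet A hApd.det_pos.ne'.isUnit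
  letI : Invertible D := invertibleOfIsUnitDet D hDpd.det_pos.ne'.isUnit
  letI : Invertible V := invertibleOfIsUnitDet V hV.det_pos.ne'.isUnit
  letI : Invertible (fromBlocks A B C D) := by rw [← hVfb]; infer_instance
  letI iS2 : Invertible (A - B * ⅟D * C) := invertibleOfFromBlocks₂₂Invertible A B C D
  letI iS1 : Invertible (D - C * ⅟A * B) := invertibleOfFromBlocks₁₁Invertible A B C D
  have hVinv : V⁻¹ = ⅟(fromBlocks A B C D) := by
    rw [invOf_eq_nonsing_inv, ← hVfb]
  have h11 : (V⁻¹).toBlocks₁₁ = ⅟(A - B * ⅟D * C) := by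
    rw [hVinv, invOf_fromBlocks₂₂_eq]; rfl
  have h22 : (V⁻¹).toBlocks₂₂ = ⅟(D - C * ⅟A * B) := by
    rw [hVinv, invOf_fromBlocks₁₁_eq]; rfl
  have hdetV2 : V.det = D.det * (A - B * ⅟D * C).det := by
    rw [hVfb]; exact det_fromBlocks₂₂ A B C D
  have hdetV1 : V.det = A.det * (D - C * ⅟A * B).det := by
    rw [hVfb]; exact det_fromBlocks₁₁ A B C D
  have hdVinv : (V⁻¹).det = (V.det)⁻¹ := by
    rw [det_nonsing_inv, Ring.inverse_eq_inv']
  have hd11 : (V⁻¹).toBlocks₁₁.det = D.det / V.det := by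
    have hD0 : D.det ≠ 0 := hDpd.det_pos.ne'
    rw [h11, invOf_eq_nonsing_inv, det_nonsing_inv, Ring.inverse_eq_inv', hdetV2,
      div_mul_eq_div_div, div_self hD0, one_div]
  have hd22 : (V⁻¹).toBlocks₂₂.det = A.det / V.det := by
    have hA0 : A.det ≠ 0 := hApd.det_pos.ne'
    rw [h22, invOf_eq_nonsing_inv, det_nonsing_inv, Ring.inverse_eq_inv', hdetV1,
      div_mul_eq_div_div, div_self hA0, one_div]
  have hV0 : V.det ≠ 0 := hV.det_pos.ne'
  have key : ∀ a d v : ℝ, v ≠ 0 → (d / v * (a / v)) / v⁻¹ = a * d / v := by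
    intro a d v hv
    field_simp
  unfold IM
  rw [hd11, hd22, hdVinv, key A.det D.det V.det hV0]
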